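/- Let R be a Noetherian ring and M an R-module. Then the set of elements x in R such that the localization M_x is a finitely generated R_x-module is an ideal of R. -/

import Mathlib

open CategoryTheory

noncomputable section

universe u

/-- The Krull dimension of a module: `dim R/ann(M)`. -/
def moduleDim (R : Type u) [CommRing R] (M : Type*) [AddCommGroup M] [Module R M] :
    WithBot (WithTop ℕ) :=
  ringKrullDim (R ⧸ Module.annihilator R M)

/-- The depth of `M` with respect to an ideal `J`: the supremum of the lengths of
`M`-regular sequences consisting of elements of `J`. -/
def moduleDepth (R : Type u) [CommRing R] (J : Ideal R) (M : Type*) [AddCommGroup M]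
    [Module R M] : ℕ∞ :=
  sSup {n : ℕ∞ | ∃ rs : List R, (rs.length : ℕ∞) = n ∧ (∀ r ∈ rs, r ∈ J) ∧
    RingTheory.Sequence.IsRegular M rs}

/-- Serre's condition `S_ℓ` : for every prime `p` in the support of `M`,
`depth M_p ≥ min (ℓ, dim M_p)`. -/
def SerreCondition (R : Type u) [CommRing R] (ℓ : ℕ) (M : Type u) [AddCommGroup M]
    [Module R M] : Prop :=
  ∀ p ∈ Module.support R M,
    min ((ℓ : ℕ∞) : WithBot ℕ∞)
        (moduleDim (Localization.AtPrime p.asIdeal) (LocalizedModule p.asIdeal.primeCompl M)) ≤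
      ((moduleDepth (Localization.AtPrime p.asIdeal)
          (IsLocalRing.maximalIdeal (Localization.AtPrime p.asIdeal))
          (LocalizedModule p.asIdeal.primeCompl M) : ℕ∞) : WithBot ℕ∞)

/-- A module `N` over `S` is `J`-cofinite if its support is contained in `V(J)` and all the
modules `Ext^i_S(S/J, N)` are finitely generated. -/
def IsCofinite (S : Type u) [CommRing S] (J : Ideal S) (N : ModuleCat.{u} S) : Prop :=
  Module.support S N ⊆ PrimeSpectrum.zeroLocus (J : Set S) ∧
  ∀ i : ℕ, Module.Finite S
    (((Ext S (ModuleCat.{u} S) i).obj (Opposite.op (ModuleCat.of S (S ⧸ J)))).obj N)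

/-- A ring is catenary if any two saturated chains of primes with the same endpoints have
the same length. -/
def IsCatenaryRing (R : Type u) [CommRing R] : Prop :=
  ∀ c₁ c₂ : LTSeries (PrimeSpectrum R),
    c₁.head = c₂.head → c₁.last = c₂.last →
    (∀ i : Fin c₁.length, c₁.toFun i.castSucc ⋖ c₁.toFun i.succ) →
    (∀ i : Fin c₂.length, c₂.toFun i.castSucc ⋖ c₂.toFun i.succ) →
    c₁.length = c₂.length

/-- A module is indecomposable if it is nonzero and is not the internal direct sum of two
nonzero submodules. -/
def ModuleIndecomposable (R : Type u) [CommRing R] (M : Type*) [AddCommGroup M]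
    [Module R M] : Prop :=
  Nontrivial M ∧ ∀ N₁ N₂ : Submodule R M, IsCompl N₁ N₂ → N₁ = ⊥ ∨ N₂ = ⊥

/-- A module is equidimensional if `dim R/P = dim M` for every minimal prime `P`
of its support (equivalently, of its annihilator). -/
def Equidimensional (R : Type u) [CommRing R] (M : Type*) [AddCommGroup M]
    [Module R M] : Prop :=
  ∀ P ∈ (Module.annihilator R M).minimalPrimes, ringKrullDim (R ⧸ P) = moduleDim R M

/-- A local ring is Cohen-Macaulay if its depth equals its Krull dimension. -/
def IsCMLocalRing (S : Type u) [CommRing S] [IsLocalRing S] : Prop :=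
  ((moduleDepth S (IsLocalRing.maximalIdeal S) S : ℕ∞) : WithBot ℕ∞) = ringKrullDim S

/-- A ring is Cohen-Macaulay if all its localizations at primes are Cohen-Macaulay local
rings. -/
def IsCMRing (S : Type u) [CommRing S] : Prop :=
  ∀ p : PrimeSpectrum S, IsCMLocalRing (Localization.AtPrime p.asIdeal)
/-- The set of `x ∈ R` such that `M_x` is a finitely generated `R_x`-module is an ideal. -/
theorem stmt0 (R : Type u) [CommRing R] [IsNoetherianRing R]
    (M : Type u) [AddCommGroup M] [Module R M] :
    ∃ D : Ideal R, ∀ x : R, x ∈ D ↔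
      Module.Finite (Localization.Away x) (LocalizedModule (Submonoid.powers x) M) := by
  classical
  set P : R → Prop := fun x => ∃ N : Submodule R M, N.FG ∧
    ∀ m : M, x ∈ (N.colon (Submodule.span R {m})).radical with hP
  refine ⟨{ carrier := setOf P
            add_mem' := ?_
            zero_mem' := ?_
            smul_mem' := ?_ }, ?_⟩
  · rintro x y ⟨N, hN, hx⟩ ⟨N', hN', hy⟩
    refine ⟨N ⊔ N', hN.sup hN', fun m => Ideal.add_mem _
      (Ideal.radical_mono (Submodule.colon_mono le_sup_left le_rfl) (hx m))
      (Ideal.radical_mono (Submodule.colon_mono le_sup_right le_rfl) (hy m))⟩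
  · exact ⟨⊥, Submodule.fg_bot, fun m => Submodule.zero_mem _⟩
  · rintro c x ⟨N, hN, hx⟩
    exact ⟨N, hN, fun m => Ideal.mul_mem_left _ c (hx m)⟩
  · intro x
    set p := Submonoid.powers x with hp
    set f := LocalizedModule.mkLinearMap p M with hf
    constructor
    · rintro ⟨N, hN, hx⟩
      obtain ⟨t, ht⟩ := hN
      refine ⟨⟨t.image f, ?_⟩⟩
      rw [Finset.coe_image, ← Submodule.localized'_span (Localization.Away x) p f, ht,
        eq_top_iff]
      rintro z -
      obtain ⟨⟨m, s⟩, rfl⟩ := IsLocalizedModule.mk'_surjective p f z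
      obtain ⟨k, hk⟩ := hx m
      rw [Submodule.mem_colon_span_singleton] at hk
      refine ⟨(⟨x ^ k, k, rfl⟩ : p) • m, by simpa [Submonoid.smul_def] using hk, (⟨x ^ k, k, rfl⟩ : p) * s, ?_⟩
      exact IsLocalizedModule.mk'_cancel_left _ _ _ _
    · intro hfin
      obtain ⟨T, hT⟩ := hfin.fg_top
      have sec : ∀ z : LocalizedModule p M, ∃ a : M × p,
          IsLocalizedModule.mk' f a.1 a.2 = z := fun z =>
        IsLocalizedModule.mk'_surjective p f z
      choose g hg using sec
      set N : Submodule R M := Submodule.span R ↑(T.image (fun z => (g z).1)) with hNdef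
      refine ⟨N, ⟨_, rfl⟩, fun m => ?_⟩
      have key : (⊤ : Submodule (Localization.Away x) (LocalizedModule p M)) ≤
          N.localized' (Localization.Away x) p f := by
        rw [← hT, Submodule.span_le]
        intro z hz
        exact ⟨(g z).1, Submodule.subset_span (by simpa using ⟨z, hz, rfl⟩),
          (g z).2, hg z⟩
      have hm : f m ∈ N.localized' (Localization.Away x) p f := key Submodule.mem_top
      obtain ⟨n, hn, s, hs⟩ := (Submodule.mem_localized' _ _ _ _ _).1 hm
      rw [← IsLocalizedModule.mk'_one p f m] at hs
      obtain ⟨c, hc⟩ := (IsLocalizedModule.mk'_eq_mk'_iff f n m s 1).1 hs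
      simp only [Submonoid.smul_def, one_smul, OneMemClass.coe_one] at hc
      obtain ⟨a, ha⟩ := c.2
      obtain ⟨b, hb⟩ := s.2
      refine ⟨a + b, Submodule.mem_colon_span_singleton.2 ?_⟩
      have ha' : x ^ a = (c : R) := ha
      have hb' : x ^ b = (s : R) := hb
      have : (x ^ (a + b)) • m = (c : R) • n := by
        rw [pow_add, ha', hb', mul_smul, hc]
      rw [this]
      exact N.smul_mem _ hn
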